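/- In the perturbed-scheme setup (see context), suppose the set of trigger indices {k ∈ ℕ : c(z^k) = true} is finite and equals {l_1 < l_2 < ... < l_P} with l_1 ≥ 1, with no two consecutive triggers (l_{j+1} ≥ l_j + 2 for all j) and with l_P + P ≤ K. Then for every k ∈ ℕ there exists N with 0 ≤ N ≤ P such that z^k = y^{k+N}; more precisely, z^k = y^k for all k ≤ l_1 and z^k = y^{k+j} for all j = 1, ..., P and all k with l_j < k ≤ l_{j+1} (where l_{P+1} = ∞). In particular every element of {z^k} appears in {y^k}. -/

import Mathlib

/-- In the perturbed-scheme setup, if the trigger indices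
`{k : c (z k) = true}` are exactly `l 0 < l 1 < ... < l (P-1)` with `l 0 ≥ 1`,
no two consecutive triggers, and `l j + P ≤ K`, then for every `k` there is
`N ≤ P` (namely `N = #{j : l j < k}`, so `N = 0` for `k ≤ l 0` and `N = j` for
`l (j-1) < k ≤ l j`) with `z k = y (k + N)`; in particular every element of
`{z k}` appears in `{y k}`. -/
theorem inner_subsequence_of_outer {n : ℕ}
    (lam : EuclideanSpace ℝ (Fin n) → ℝ)
    (p : EuclideanSpace ℝ (Fin n) → EuclideanSpace ℝ (Fin n))
    (T : EuclideanSpace ℝ (Fin n) → EuclideanSpace ℝ (Fin n))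
    (hT : ∀ x, T x = x + lam x • p x)
    (c : EuclideanSpace ℝ (Fin n) → Bool)
    (B : EuclideanSpace ℝ (Fin n) → EuclideanSpace ℝ (Fin n))
    (K : ℕ)
    (x0 : EuclideanSpace ℝ (Fin n))
    (y z : ℕ → EuclideanSpace ℝ (Fin n))
    (hy0 : y 0 = x0) (hz0 : z 0 = x0)
    (hz : ∀ k, z (k + 1) =
      T (z k + (if k ≤ K then (1 : ℝ) else 0) •
        (if c (z k) = true then B (z k) else 0)))
    (hy : ∀ k, y (k + 1) =
      T (y k) + (if k ≤ K then (1 : ℝ) else 0) •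
        (if 1 ≤ k ∧ c (y (k - 1)) = false ∧ c (y k) = true then
          B (y k) - lam (y k) • p (y k) else 0))
    (P : ℕ) (l : Fin P → ℕ)
    (hmono : StrictMono l)
    (htrig : ∀ k, c (z k) = true ↔ ∃ j : Fin P, l j = k)
    (hfirst : ∀ j : Fin P, 1 ≤ l j)
    (hgap : ∀ i j : Fin P, (i : ℕ) + 1 = (j : ℕ) → l i + 2 ≤ l j)
    (hK : ∀ j : Fin P, l j + P ≤ K) :
    ∀ k : ℕ, ∃ N : ℕ, N ≤ P ∧
      N = (Finset.univ.filter fun j : Fin P => l j < k).card ∧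
      z k = y (k + N) := by
  set Nf : ℕ → ℕ := fun k => (Finset.univ.filter fun j : Fin P => l j < k).card with hNfdef
  have hNle : ∀ k, Nf k ≤ P := by
    intro k
    calc Nf k ≤ Finset.univ.card := Finset.card_filter_le _ _
      _ = P := by simp
  have hN0 : Nf 0 = 0 := by simp [hNfdef]
  have hNfalse : ∀ k, c (z k) = false → Nf (k + 1) = Nf k := by
    intro k hc
    have : (Finset.univ.filter fun j : Fin P => l j < k + 1)
        = (Finset.univ.filter fun j : Fin P => l j < k) := by
      apply Finset.filter_congr
      intro j _
      have : l j ≠ k := by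
        intro h
        have := (htrig k).mpr ⟨j, h⟩
        simp [hc] at this
      omega
    simp only [hNfdef, this]
  have hNtrue : ∀ k (j : Fin P), l j = k → Nf (k + 1) = Nf k + 1 := by
    intro k j hj
    have : (Finset.univ.filter fun i : Fin P => l i < k + 1)
        = insert j (Finset.univ.filter fun i : Fin P => l i < k) := by
      ext i
      simp only [Finset.mem_filter, Finset.mem_univ, true_and, Finset.mem_insert]
      constructor
      · intro h
        rcases Nat.lt_succ_iff_lt_or_eq.mp h with h | h
        · exact Or.inr h
        · exact Or.inl (hmono.injective (by rw [hj, h]))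
      · rintro (rfl | h)
        · omega
        · omega
    have hnot : j ∉ (Finset.univ.filter fun i : Fin P => l i < k) := by
      simp [hj]
    simp only [hNfdef, this, Finset.card_insert_of_notMem hnot]
  have main : ∀ k, z k = y (k + Nf k) := by
    intro k
    induction k using Nat.strong_induction_on with
    | _ k ih =>
      match k with
      | 0 => rw [hN0]; rw [hz0, hy0]
      | (k + 1) =>
        have ihk := ih k (by omega)
        by_cases hc : c (z k) = true
        · -- trigger at step k
          obtain ⟨j, hj⟩ := (htrig k).mp hc
          -- k ≥ 1
          obtain ⟨m, rfl⟩ : ∃ m, k = m + 1 :=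
            ⟨k - 1, by have := hfirst j; omega⟩
          have ihm := ih m (by omega)
          -- no trigger at m
          have hcm : c (z m) = false := by
            by_contra h
            have h' : c (z m) = true := by
              cases hcm' : c (z m) <;> simp_all
            obtain ⟨i, hi⟩ := (htrig m).mp h'
            have hij : i < j := hmono.lt_iff_lt.mp (by omega)
            have hiP : (i : ℕ) + 1 < P := by
              have := j.isLt
              have : (i : ℕ) + 1 ≤ (j : ℕ) := hij
              omega
            set j' : Fin P := ⟨(i : ℕ) + 1, hiP⟩ with hj'
            have h2 := hgap i j' rfl
            have hle : l j' ≤ l j := hmono.monotone (by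
              simp [Fin.le_def, hj']
              exact hij)
            omega
          have hNm : Nf (m + 1) = Nf m := hNfalse m hcm
          have hNk : Nf (m + 2) = Nf (m + 1) + 1 := hNtrue (m + 1) j hj
          set M := m + 1 + Nf (m + 1) with hM
          have hyM : y M = z (m + 1) := ihk.symm
          have hyM1 : y (M - 1) = z m := by
            have : M - 1 = m + Nf m := by omega
            rw [this]; exact ihm.symm
          have hcyM : c (y M) = true := by rw [hyM]; exact hc
          have hcyM1 : c (y (M - 1)) = false := by rw [hyM1]; exact hcm
          have hMK : M ≤ K := by
            have h1 := hK j
            have h2 := hNle (m + 1)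
            omega
          have hM1 : 1 ≤ M := by omega
          -- step M of y
          have hstep1 : y (M + 1) = z (m + 1) + B (z (m + 1)) := by
            rw [hy M, if_pos hMK, if_pos ⟨hM1, hcyM1, hcyM⟩, hT, one_smul, hyM]
            abel
          -- step M+1 of y
          have hstep2 : y (M + 2) = T (y (M + 1)) := by
            have hne : ¬ (1 ≤ M + 1 ∧ c (y (M + 1 - 1)) = false ∧ c (y (M + 1)) = true) := by
              rintro ⟨-, h2, -⟩
              simp only [Nat.add_sub_cancel] at h2
              rw [hcyM] at h2
              exact absurd h2 (by simp)
            rw [hy (M + 1), if_neg hne]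
            simp
          -- step m+1 of z
          have hzstep : z (m + 2) = T (z (m + 1) + B (z (m + 1))) := by
            rw [hz (m + 1), if_pos (by have := hK j; omega : m + 1 ≤ K), if_pos hc, one_smul]
          have hNk' : Nf (m + 1 + 1) = Nf (m + 1) + 1 := hNk
          have : m + 1 + 1 + Nf (m + 1 + 1) = M + 2 := by omega
          rw [this, hstep2, hstep1, hzstep]
        · -- no trigger at step k
          have hc' : c (z k) = false := by cases h : c (z k) <;> simp_all
          have hNk : Nf (k + 1) = Nf k := hNfalse k hc'
          have hzstep : z (k + 1) = T (z k) := by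
            rw [hz k, hc']
            simp
          have hystep : y (k + Nf k + 1) = T (y (k + Nf k)) := by
            have hne : ¬ (1 ≤ k + Nf k ∧ c (y (k + Nf k - 1)) = false ∧
                c (y (k + Nf k)) = true) := by
              rintro ⟨-, -, h3⟩
              rw [← ihk, hc'] at h3
              exact absurd h3 (by simp)
            rw [hy (k + Nf k), if_neg hne]
            simp
          rw [hNk]
          have : k + 1 + Nf k = k + Nf k + 1 := by omega
          rw [this, hystep, hzstep, ihk]
  exact fun k => ⟨Nf k, hNle k, rfl, main k⟩
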